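/- Let M = (S, ρ) be a matroid scheme and a an atom of S. The following are equivalent: (1) ρ(a) = 0; (2) a ≤ x for every flat x of M; (3) a ≤ m for every maximal element m of S, and a ≰ b for every basis b ∈ B(M). -/

import Mathlib

/-- The set of minimal upper bounds of `x` and `y` (denoted `x ∨ y` in the paper). -/
def mub {S : Type*} [PartialOrder S] (x y : S) : Set S :=
  {u | x ≤ u ∧ y ≤ u ∧ ∀ v, x ≤ v → y ≤ v → v ≤ u → v = u}

/-- The set of maximal lower bounds of `x` and `y` (denoted `x ∧ y` in the paper). -/
def mlb {S : Type*} [PartialOrder S] (x y : S) : Set S :=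
  {l | l ≤ x ∧ l ≤ y ∧ ∀ m, m ≤ x → m ≤ y → l ≤ m → m = l}

/-- The set of minimal upper bounds of a subset `T`. -/
def mubSet {S : Type*} [PartialOrder S] (T : Set S) : Set S :=
  {u | (∀ t ∈ T, t ≤ u) ∧ ∀ v, (∀ t ∈ T, t ≤ v) → v ≤ u → v = u}

/-- The number of atoms below `x`, i.e. `|x|`, the rank of `x` in a simplicial poset. -/
noncomputable def natRank {S : Type*} [PartialOrder S] [OrderBot S] (x : S) : ℕ :=
  Nat.card {a : S // IsAtom a ∧ a ≤ x}

/-- A finite bounded-below poset is simplicial if every lower interval is isomorphic to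
the Boolean lattice of subsets of the set of atoms below. -/
def IsSimplicialPoset (S : Type*) [PartialOrder S] [OrderBot S] [Fintype S] : Prop :=
  ∀ x : S, Nonempty (Set.Iic x ≃o Set {a : S // IsAtom a ∧ a ≤ x})

/-- A matroid scheme: a rank function `ρ` on a finite simplicial poset `S`
satisfying (M1)–(M5). -/
structure IsMatroidScheme {S : Type*} [PartialOrder S] [OrderBot S] [Fintype S]
    (ρ : S → ℕ) : Prop where
  simplicial : IsSimplicialPoset S
  M1 : ∀ x : S, ρ x ≤ natRank x
  M2 : ∀ ⦃x y : S⦄, x ≤ y → ρ x ≤ ρ y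
  M3 : ∀ x y u l : S, u ∈ mub x y → l ∈ mlb x y → ρ u + ρ l ≤ ρ x + ρ y
  M4 : ∀ x y l : S, l ∈ mlb x y → ρ x = ρ l → (mub x y).Nonempty
  M5 : ∀ x y : S, ρ x < ρ y →
    ∃ a : S, IsAtom a ∧ a ≤ y ∧ ¬ a ≤ x ∧ (mub x a).Nonempty

/-- `cl` is the closure operator of a matroid scheme `(S, ρ)`:
`cl x` is the greatest element above `x` of the same rank. -/
def IsClosureFun {S : Type*} [PartialOrder S] (ρ : S → ℕ) (cl : S → S) : Prop :=
  ∀ x : S, x ≤ cl x ∧ ρ (cl x) = ρ x ∧ ∀ y : S, x ≤ y → ρ y = ρ x → y ≤ cl x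

/-- The bases of a matroid scheme: the maximal independent elements. -/
def Bases {S : Type*} [PartialOrder S] [OrderBot S] (ρ : S → ℕ) : Set S :=
  {x | ρ x = natRank x ∧ ∀ w, ρ w = natRank w → x ≤ w → w = x}

/-- The circuits of a matroid scheme: the minimal dependent elements. -/
def Circuits {S : Type*} [PartialOrder S] [OrderBot S] (ρ : S → ℕ) : Set S :=
  {x | ρ x < natRank x ∧ ∀ y, ρ y < natRank y → y ≤ x → y = x}

/-- `c` is the complement `x ∖ a` of `a` in the Boolean lattice `S_{≤ x}`. -/
def IsComplementIn {S : Type*} [PartialOrder S] [OrderBot S] (c a x : S) : Prop :=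
  c ≤ x ∧ a ≤ x ∧ (∀ l : S, l ≤ c → l ≤ a → l = ⊥) ∧
    (∀ u : S, u ≤ x → c ≤ u → a ≤ u → u = x)

/-- The rank of a matroid scheme: the common value of `ρ` on maximal elements
(equal to the maximum value of `ρ`). -/
noncomputable def schemeRank {S : Type*} [Fintype S] (ρ : S → ℕ) : ℕ :=
  sSup (Set.range ρ)

/-- The Tutte polynomial of a matroid scheme, as a two-variable integer function. -/
noncomputable def tutte {S : Type*} [PartialOrder S] [OrderBot S] [Fintype S]
    (ρ : S → ℕ) (x y : ℤ) : ℤ :=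
  ∑ w : S, (x - 1) ^ (schemeRank ρ - ρ w) * (y - 1) ^ (natRank w - ρ w)

/-- An element of a poset is an order-atom if it covers a global minimum. -/
def OrdAtom {P : Type*} [PartialOrder P] (a : P) : Prop :=
  ∃ b : P, (∀ z : P, b ≤ z) ∧ b ⋖ a

/-- A partial order is a geometric lattice: it is bounded below, every pair has a least
upper bound and greatest lower bound, it is atomistic, and it is (upper) semimodular. -/
def IsGeomLatOrder (P : Type*) [PartialOrder P] : Prop :=
  (∃ b : P, ∀ x : P, b ≤ x) ∧
  (∀ x y : P, ∃ u : P, IsLUB {x, y} u) ∧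
  (∀ x y : P, ∃ l : P, IsGLB {x, y} l) ∧
  (∀ x : P, IsLUB {a : P | OrdAtom a ∧ a ≤ x} x) ∧
  (∀ x y m j : P, IsGLB {x, y} m → IsLUB {x, y} j → m ⋖ x → y ⋖ j)

/-- A geometric poset: a finite bounded-below poset with rank function `rk`
satisfying (G1) and (G2). -/
def IsGeometricPoset (P : Type*) [PartialOrder P] [OrderBot P] [Fintype P]
    (rk : P → ℕ) : Prop :=
  rk ⊥ = 0 ∧
  (∀ ⦃x y : P⦄, x ≤ y → rk x ≤ rk y) ∧
  (∀ x y : P, x ⋖ y → rk y = rk x + 1) ∧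
  (∀ m : P, IsMax m → IsGeomLatOrder (Set.Iic m)) ∧
  (∀ (x : P) (A : Set P), (∀ a ∈ A, IsAtom a) →
    ∀ y ∈ mubSet A, rk x < rk y → rk y = Nat.card A →
      ∃ a ∈ A, ¬ a ≤ x ∧ ∃ w : P, x ≤ w ∧ a ≤ w)

/-- Proposition 7.1: characterizations of a loop. -/
lemma natRank_eq {S : Type*} [PartialOrder S] [OrderBot S] (x : S) :
    natRank x = Set.ncard {a : S | IsAtom a ∧ a ≤ x} := by
  rw [natRank, ← Nat.card_coe_set_eq]
  rfl

lemma natRank_bot {S : Type*} [PartialOrder S] [OrderBot S] : natRank (⊥ : S) = 0 := by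
  rw [natRank_eq]
  convert Set.ncard_empty S
  ext z
  simp only [Set.mem_setOf_eq, Set.mem_empty_iff_false, iff_false, not_and]
  intro hz hle
  exact hz.1 (le_bot_iff.mp hle)

lemma natRank_atom {S : Type*} [PartialOrder S] [OrderBot S] {a : S} (ha : IsAtom a) :
    natRank a = 1 := by
  rw [natRank_eq]
  have : {a' : S | IsAtom a' ∧ a' ≤ a} = {a} := by
    ext z
    simp only [Set.mem_setOf_eq, Set.mem_singleton_iff]
    constructor
    · rintro ⟨hz, hza⟩
      rcases lt_or_eq_of_le hza with hlt | he
      · exact absurd (ha.2 z hlt) hz.1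
      · exact he
    · rintro rfl; exact ⟨ha, le_rfl⟩
  rw [this, Set.ncard_singleton]

/-- Complement lemma in a simplicial poset. -/
lemma compl_exists {S : Type*} [PartialOrder S] [OrderBot S] [Fintype S]
    (hs : IsSimplicialPoset S) {a b : S} (ha : IsAtom a) (hab : a ≤ b) :
    ∃ c : S, b ∈ mub c a ∧ (⊥ : S) ∈ mlb c a ∧ natRank c < natRank b := by
  obtain ⟨e⟩ := hs b
  set T : Set {a' : S // IsAtom a' ∧ a' ≤ b} := e ⟨a, hab⟩ with hT
  set c' : Set.Iic b := e.symm Tᶜ with hc'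
  refine ⟨c'.1, ?_, ?_, ?_⟩
  · -- b ∈ mub c a
    refine ⟨c'.2, hab, ?_⟩
    intro v hcv hav hvb
    have h1 : Tᶜ ⊆ e ⟨v, hvb⟩ := by
      have : c' ≤ (⟨v, hvb⟩ : Set.Iic b) := Subtype.coe_le_coe.mp hcv
      calc Tᶜ = e c' := (e.apply_symm_apply Tᶜ).symm
        _ ⊆ e ⟨v, hvb⟩ := e.le_iff_le.mpr this
    have h2 : T ⊆ e ⟨v, hvb⟩ :=
      e.le_iff_le.mpr (Subtype.coe_le_coe.mp hav : (⟨a, hab⟩ : Set.Iic b) ≤ ⟨v, hvb⟩)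
    have huniv : e ⟨v, hvb⟩ = Set.univ := by
      apply Set.eq_univ_of_forall
      intro γ
      by_cases hg : γ ∈ T
      · exact h2 hg
      · exact h1 hg
    have : (⟨b, le_refl b⟩ : Set.Iic b) ≤ ⟨v, hvb⟩ := by
      apply e.le_iff_le.mp
      rw [huniv]; exact Set.subset_univ _
    exact le_antisymm hvb this
  · -- ⊥ ∈ mlb c a
    refine ⟨bot_le, bot_le, ?_⟩
    intro m hmc hma _
    have hmb : m ≤ b := hma.trans hab
    have h1 : e ⟨m, hmb⟩ ⊆ Tᶜ := by
      have : (⟨m, hmb⟩ : Set.Iic b) ≤ c' := Subtype.coe_le_coe.mp hmc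
      calc e ⟨m, hmb⟩ ⊆ e c' := e.le_iff_le.mpr this
        _ = Tᶜ := e.apply_symm_apply Tᶜ
    have h2 : e ⟨m, hmb⟩ ⊆ T :=
      e.le_iff_le.mpr (Subtype.coe_le_coe.mp hma : (⟨m, hmb⟩ : Set.Iic b) ≤ ⟨a, hab⟩)
    have hemp : e ⟨m, hmb⟩ = ∅ := by
      ext γ; simp only [Set.mem_empty_iff_false, iff_false]
      intro hg; exact h1 hg (h2 hg)
    have : (⟨m, hmb⟩ : Set.Iic b) ≤ ⟨⊥, bot_le⟩ := by
      apply e.le_iff_le.mp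
      rw [hemp]; exact Set.empty_subset _
    exact le_bot_iff.mp this
  · -- natRank c < natRank b
    have hTne : T ≠ ∅ := by
      intro hemp
      have : (⟨a, hab⟩ : Set.Iic b) ≤ ⟨⊥, bot_le⟩ := by
        apply e.le_iff_le.mp
        rw [← hT, hemp]; exact Set.empty_subset _
      exact ha.1 (le_bot_iff.mp this)
    have hac : ¬ a ≤ c'.1 := by
      intro hle
      have hle' : (⟨a, hab⟩ : Set.Iic b) ≤ c' := Subtype.coe_le_coe.mp hle
      have h2 : T ⊆ Tᶜ := by
        have := e.le_iff_le.mpr hle'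
        rwa [e.apply_symm_apply Tᶜ] at this
      obtain ⟨γ, hγ⟩ := Set.nonempty_iff_ne_empty.mpr hTne
      exact h2 hγ hγ
    rw [natRank_eq, natRank_eq]
    apply Set.ncard_lt_ncard _ (Set.toFinite _)
    constructor
    · rintro z ⟨h1, h2⟩; exact ⟨h1, h2.trans c'.2⟩
    · intro hsup
      exact hac (hsup ⟨ha, hab⟩).2

theorem statement11 {S : Type*} [PartialOrder S] [OrderBot S] [Fintype S]
    (ρ : S → ℕ) (h : IsMatroidScheme ρ) (cl : S → S) (hcl : IsClosureFun ρ cl)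
    (a : S) (ha : IsAtom a) :
    (ρ a = 0 ↔ ∀ x : S, cl x = x → a ≤ x) ∧
    (ρ a = 0 ↔ ((∀ m : S, IsMax m → a ≤ m) ∧ ∀ b ∈ Bases ρ, ¬ a ≤ b)) := by
  have hρbot : ρ (⊥ : S) = 0 := by
    have := h.M1 (⊥ : S)
    rw [natRank_bot] at this
    omega
  have dirA : ρ a = 0 → ∀ x : S, cl x = x → a ≤ x := by
    intro h0 x hx
    by_cases hax : a ≤ x
    · exact hax
    · have hmlb : (⊥ : S) ∈ mlb a x := by
        refine ⟨bot_le, bot_le, ?_⟩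
        intro m hma hmx _
        rcases lt_or_eq_of_le hma with hlt | he
        · exact ha.2 m hlt
        · subst he
          exact (hax hmx).elim
      obtain ⟨u, hu⟩ := h.M4 a x ⊥ hmlb (by rw [h0, hρbot])
      have h3 := h.M3 a x u ⊥ hu hmlb
      rw [hρbot, h0] at h3
      have hxu : x ≤ u := hu.2.1
      have hru : ρ u = ρ x := le_antisymm (by omega) (h.M2 hxu)
      have hux : u ≤ x := by
        have := (hcl x).2.2 u hxu hru
        rwa [hx] at this
      exact hu.1.trans hux
  have dirB : (∀ x : S, cl x = x → a ≤ x) → ρ a = 0 := by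
    intro hf
    have hflat : cl (cl (⊥ : S)) = cl ⊥ := by
      apply le_antisymm
      · exact (hcl ⊥).2.2 (cl (cl ⊥)) ((hcl ⊥).1.trans (hcl (cl ⊥)).1)
          (by rw [(hcl (cl ⊥)).2.1, (hcl ⊥).2.1])
      · exact (hcl (cl ⊥)).1
    have h1 : a ≤ cl ⊥ := hf (cl ⊥) hflat
    have h2 := h.M2 h1
    rw [(hcl ⊥).2.1, hρbot] at h2
    omega
  have dirC : ρ a = 0 → ((∀ m : S, IsMax m → a ≤ m) ∧ ∀ b ∈ Bases ρ, ¬ a ≤ b) := by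
    intro h0
    constructor
    · intro m hm
      exact dirA h0 m (le_antisymm (hm (hcl m).1) (hcl m).1)
    · intro b hb hab
      obtain ⟨c, hmub, hmlb, hlt⟩ := compl_exists h.simplicial ha hab
      have h3 := h.M3 c a b ⊥ hmub hmlb
      rw [hρbot, h0] at h3
      have h4 : ρ c ≤ natRank c := h.M1 c
      have h5 : ρ b = natRank b := hb.1
      omega
  have dirD : ((∀ m : S, IsMax m → a ≤ m) ∧ ∀ b ∈ Bases ρ, ¬ a ≤ b) → ρ a = 0 := by
    rintro ⟨-, hbase⟩
    by_contra h0
    have h1 : ρ a = natRank a := by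
      have := h.M1 a
      rw [natRank_atom ha] at this ⊢
      omega
    obtain ⟨b, ⟨hab, hbind⟩, hmax⟩ := Set.Finite.exists_maximalFor id
      {w : S | a ≤ w ∧ ρ w = natRank w} (Set.toFinite _) ⟨a, le_rfl, h1⟩
    refine hbase b ⟨hbind, ?_⟩ hab
    intro w hw hbw
    exact le_antisymm (hmax ⟨hab.trans hbw, hw⟩ hbw) hbw
  exact ⟨⟨dirA, dirB⟩, ⟨dirC, dirD⟩⟩
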